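/- Let α > 0 and λ₁, λ₂ > 0. Then for all r ∈ (0,1), the derivatives satisfy (φ_λ^−)'(r) ≥ λ₁ and (ψ_λ^−)'(r) ≥ λ₂, where φ_λ^−(r) = λ₁ r − λ₂(1 − r^α)^{2/α} and ψ_λ^−(r) = λ₂ r − λ₁(1 − r^{α/2})^{1/α}. Moreover, if α ∈ (0,1] ∪ [2,∞), then (φ_λ^−)' and (ψ_λ^−)' are each monotone on (0,1). -/

import Mathlib

open Set

/-- The constant `C_α`. -/
noncomputable def Calpha (α : ℝ) : ℝ :=
  if 1 < α ∧ α < 2 then 2 * (2 - α) ^ (2 / α - 1) * (α - 1) ^ (1 - 1 / α) else 2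

/-- The phase `φ_λ⁻(r) = l₁ r - l₂ (1 - r^α)^{2/α}`. -/
noncomputable def phaseMinus (α l₁ l₂ r : ℝ) : ℝ :=
  l₁ * r - l₂ * (1 - r ^ α) ^ (2 / α)

/-- The phase `ψ_λ⁻(r) = l₂ r - l₁ (1 - r^{α/2})^{1/α}`. -/
noncomputable def psiMinus (α l₁ l₂ r : ℝ) : ℝ :=
  l₂ * r - l₁ * (1 - r ^ (α / 2)) ^ (1 / α)

private lemma hasDeriv_aux (a b e q : ℝ) (he : 0 < e) {r : ℝ} (hr0 : 0 < r) (hr1 : r < 1) :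
    HasDerivAt (fun r : ℝ => a * r - b * (1 - r ^ e) ^ q)
      (a + b * e * q * r ^ (e - 1) * (1 - r ^ e) ^ (q - 1)) r := by
  have hre : r ^ e < 1 := Real.rpow_lt_one hr0.le hr1 he
  have hne : (1 : ℝ) - r ^ e ≠ 0 := by
    have : (0:ℝ) < 1 - r ^ e := by linarith
    exact this.ne'
  have h1 : HasDerivAt (fun x : ℝ => x ^ e) (e * r ^ (e - 1)) r :=
    Real.hasDerivAt_rpow_const (Or.inl hr0.ne')
  have h2 : HasDerivAt (fun x : ℝ => 1 - x ^ e) (-(e * r ^ (e - 1))) r := by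
    exact ((hasDerivAt_const r (1:ℝ)).sub h1).congr_deriv (by ring)
  have h3 : HasDerivAt (fun x : ℝ => (1 - x ^ e) ^ q)
      (-(e * r ^ (e - 1)) * q * (1 - r ^ e) ^ (q - 1)) r :=
    h2.rpow_const (Or.inl hne)
  have h4 := ((hasDerivAt_id r).const_mul a).sub (h3.const_mul b)
  exact h4.congr_deriv (by ring)

private lemma aux_mono (K c e p q : ℝ) (hc : 0 ≤ c) (he : 0 < e) (hp : 0 ≤ p) (hq : q ≤ 0) :
    MonotoneOn (fun r : ℝ => K + c * r ^ p * (1 - r ^ e) ^ q) (Ioo 0 1) := by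
  intro x hx y hy hxy
  have hye : y ^ e < 1 := Real.rpow_lt_one hy.1.le hy.2 he
  have hy1 : (0:ℝ) < 1 - y ^ e := by linarith
  have hxe : x ^ e ≤ y ^ e := Real.rpow_le_rpow hx.1.le hxy he.le
  have h1 : x ^ p ≤ y ^ p := Real.rpow_le_rpow hx.1.le hxy hp
  have h2 : (1 - x ^ e) ^ q ≤ (1 - y ^ e) ^ q :=
    Real.rpow_le_rpow_of_nonpos hy1 (by linarith) hq
  have hxp : (0:ℝ) ≤ x ^ p := Real.rpow_nonneg hx.1.le p
  have hxq : (0:ℝ) ≤ (1 - x ^ e) ^ q := Real.rpow_nonneg (by linarith) q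
  have hyp : (0:ℝ) ≤ y ^ p := Real.rpow_nonneg hy.1.le p
  have := mul_le_mul (mul_le_mul_of_nonneg_left h1 hc) h2 hxq (by positivity)
  simpa using add_le_add_left this K

private lemma aux_anti (K c e p q : ℝ) (hc : 0 ≤ c) (he : 0 < e) (hp : p ≤ 0) (hq : 0 ≤ q) :
    AntitoneOn (fun r : ℝ => K + c * r ^ p * (1 - r ^ e) ^ q) (Ioo 0 1) := by
  intro x hx y hy hxy
  have hye : y ^ e < 1 := Real.rpow_lt_one hy.1.le hy.2 he
  have hy1 : (0:ℝ) < 1 - y ^ e := by linarith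
  have hxe : x ^ e ≤ y ^ e := Real.rpow_le_rpow hx.1.le hxy he.le
  have h1 : y ^ p ≤ x ^ p := Real.rpow_le_rpow_of_nonpos hx.1 hxy hp
  have h2 : (1 - y ^ e) ^ q ≤ (1 - x ^ e) ^ q :=
    Real.rpow_le_rpow hy1.le (by linarith) hq
  have hyq : (0:ℝ) ≤ (1 - y ^ e) ^ q := Real.rpow_nonneg hy1.le q
  have hxp : (0:ℝ) ≤ x ^ p := Real.rpow_nonneg hx.1.le p
  have := mul_le_mul (mul_le_mul_of_nonneg_left h1 hc) h2 hyq (by positivity)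
  simpa using add_le_add_left this K

theorem phaseMinus_properties (α l₁ l₂ : ℝ) (hα : 0 < α)
    (hl₁ : 0 < l₁) (hl₂ : 0 < l₂) :
    (∀ r ∈ Ioo (0 : ℝ) 1, l₁ ≤ deriv (phaseMinus α l₁ l₂) r) ∧
    (∀ r ∈ Ioo (0 : ℝ) 1, l₂ ≤ deriv (psiMinus α l₁ l₂) r) ∧
    (α ≤ 1 ∨ 2 ≤ α →
      (MonotoneOn (deriv (phaseMinus α l₁ l₂)) (Ioo 0 1) ∨
        AntitoneOn (deriv (phaseMinus α l₁ l₂)) (Ioo 0 1)) ∧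
      (MonotoneOn (deriv (psiMinus α l₁ l₂)) (Ioo 0 1) ∨
        AntitoneOn (deriv (psiMinus α l₁ l₂)) (Ioo 0 1))) := by
  have hα' : α ≠ 0 := hα.ne'
  have hφ : ∀ r ∈ Ioo (0 : ℝ) 1, deriv (phaseMinus α l₁ l₂) r
      = l₁ + 2 * l₂ * r ^ (α - 1) * (1 - r ^ α) ^ (2 / α - 1) := by
    intro r hr
    have h : HasDerivAt (phaseMinus α l₁ l₂)
        (l₁ + l₂ * α * (2 / α) * r ^ (α - 1) * (1 - r ^ α) ^ (2 / α - 1)) r := by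
      unfold phaseMinus
      exact hasDeriv_aux l₁ l₂ α (2 / α) hα hr.1 hr.2
    rw [h.deriv]
    field_simp
  have hψ : ∀ r ∈ Ioo (0 : ℝ) 1, deriv (psiMinus α l₁ l₂) r
      = l₂ + (l₁ / 2) * r ^ (α / 2 - 1) * (1 - r ^ (α / 2)) ^ (1 / α - 1) := by
    intro r hr
    have h : HasDerivAt (psiMinus α l₁ l₂)
        (l₂ + l₁ * (α / 2) * (1 / α) * r ^ (α / 2 - 1) * (1 - r ^ (α / 2)) ^ (1 / α - 1)) r := by
      unfold psiMinus
      exact hasDeriv_aux l₂ l₁ (α / 2) (1 / α) (by positivity) hr.1 hr.2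
    rw [h.deriv]
    field_simp
  refine ⟨?_, ?_, ?_⟩
  · intro r hr
    rw [hφ r hr]
    have h1 : (0:ℝ) < r ^ (α - 1) := Real.rpow_pos_of_pos hr.1 _
    have hre : r ^ α < 1 := Real.rpow_lt_one hr.1.le hr.2 hα
    have h2 : (0:ℝ) < (1 - r ^ α) ^ (2 / α - 1) := Real.rpow_pos_of_pos (by linarith) _
    nlinarith [mul_pos (mul_pos (mul_pos two_pos hl₂) h1) h2]
  · intro r hr
    rw [hψ r hr]
    have h1 : (0:ℝ) < r ^ (α / 2 - 1) := Real.rpow_pos_of_pos hr.1 _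
    have hre : r ^ (α / 2) < 1 := Real.rpow_lt_one hr.1.le hr.2 (by positivity)
    have h2 : (0:ℝ) < (1 - r ^ (α / 2)) ^ (1 / α - 1) := Real.rpow_pos_of_pos (by linarith) _
    nlinarith [mul_pos (mul_pos (half_pos hl₁) h1) h2]
  · rintro (h1 | h2)
    · constructor
      · right
        intro x hx y hy hxy
        rw [hφ x hx, hφ y hy]
        have hq : (0:ℝ) ≤ 2 / α - 1 := by
          have : (1:ℝ) ≤ 2 / α := (one_le_div hα).2 (by linarith)
          linarith
        exact aux_anti l₁ (2 * l₂) α (α - 1) (2 / α - 1) (by positivity) hα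
          (by linarith) hq hx hy hxy
      · right
        intro x hx y hy hxy
        rw [hψ x hx, hψ y hy]
        have hq : (0:ℝ) ≤ 1 / α - 1 := by
          have : (1:ℝ) ≤ 1 / α := (one_le_div hα).2 h1
          linarith
        exact aux_anti l₂ (l₁ / 2) (α / 2) (α / 2 - 1) (1 / α - 1) (by positivity)
          (by positivity) (by linarith) hq hx hy hxy
    · constructor
      · left
        intro x hx y hy hxy
        rw [hφ x hx, hφ y hy]
        have hq : 2 / α - 1 ≤ 0 := by
          have : 2 / α ≤ 1 := (div_le_one hα).2 h2
          linarith
        exact aux_mono l₁ (2 * l₂) α (α - 1) (2 / α - 1) (by positivity) hα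
          (by linarith) hq hx hy hxy
      · left
        intro x hx y hy hxy
        rw [hψ x hx, hψ y hy]
        have hq : 1 / α - 1 ≤ 0 := by
          have : 1 / α ≤ 1 := (div_le_one hα).2 (by linarith)
          linarith
        exact aux_mono l₂ (l₁ / 2) (α / 2) (α / 2 - 1) (1 / α - 1) (by positivity)
          (by positivity) (by linarith) hq hx hy hxy
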